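/- For any m ∈ ℝ and B > 0, the Mullins grain-boundary-groove profile y₀(x,t) satisfies Mullins' linear surface-diffusion equation ∂y₀/∂t(x,t) = −B ∂⁴y₀/∂x⁴(x,t) at every point (x,t) with x > 0 and t > 0. -/

import Mathlib

set_option maxHeartbeats 1000000

/-- Pochhammer symbol (rising factorial) `(a)_k = a(a+1)⋯(a+k-1)`. -/
noncomputable def poch (a : ℝ) (k : ℕ) : ℝ := ∏ i ∈ Finset.range k, (a + (i : ℝ))

/-- Generalized hypergeometric function `₁F₃(a; b₁, b₂, b₃; z)`. -/
noncomputable def F13 (a b₁ b₂ b₃ z : ℝ) : ℝ :=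
  ∑' k : ℕ, poch a k / (poch b₁ k * poch b₂ k * poch b₃ k) * z ^ k / (Nat.factorial k)

/-- The Mullins grain-boundary-groove profile `y₀(x,t)`. -/
noncomputable def mullinsY (m B x t : ℝ) : ℝ :=
  m / 2 * x
  - m * x ^ 2 / (4 * Real.sqrt 2 * (B * t) ^ ((1:ℝ)/4) * Real.Gamma (3/4)) *
      F13 (1/4) (3/4) (5/4) (3/2) (x ^ 4 / (256 * B * t))
  - m * (B * t) ^ ((1:ℝ)/4) / (2 * Real.sqrt 2 * Real.Gamma (5/4)) *
      F13 (-1/4) (1/4) (1/2) (3/4) (x ^ 4 / (256 * B * t))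


namespace MullinsAux

lemma poch_zero (a : ℝ) : poch a 0 = 1 := by simp [poch]

lemma poch_succ (a : ℝ) (k : ℕ) : poch a (k + 1) = poch a k * (a + k) := by
  simp [poch, Finset.prod_range_succ]

lemma poch_pos {a : ℝ} (ha : 0 < a) (k : ℕ) : 0 < poch a k := by
  apply Finset.prod_pos; intro i _; positivity

lemma abs_poch_le {a b : ℝ} (hab : |a| ≤ b) (k : ℕ) : |poch a k| ≤ poch b k := by
  rw [poch, poch, Finset.abs_prod]
  refine Finset.prod_le_prod (fun i _ => abs_nonneg _) (fun i _ => ?_)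
  calc |a + (i:ℝ)| ≤ |a| + |(i:ℝ)| := abs_add_le _ _
    _ ≤ b + (i:ℝ) := by rw [Nat.abs_cast]; linarith

lemma one_le_poch {a : ℝ} (ha : 1 ≤ a) (k : ℕ) : 1 ≤ poch a k := by
  induction k with
  | zero => simp [poch_zero]
  | succ n ih =>
    rw [poch_succ]
    have h0 : (0:ℝ) ≤ (n:ℝ) := Nat.cast_nonneg n
    nlinarith

lemma le_poch {a : ℝ} (ha : 0 < a) (ha1 : a ≤ 1) (k : ℕ) : a ≤ poch a k := by
  induction k with
  | zero => simpa [poch_zero]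
  | succ n ih =>
    rw [poch_succ]
    rcases Nat.eq_zero_or_pos n with h | h
    · subst h; simp [poch_zero]
    · have h1 : (1:ℝ) ≤ (n:ℝ) := by exact_mod_cast h
      nlinarith [poch_pos ha n]

/-- entire-type summability of a monomial series -/
def Entire (a : ℕ → ℝ) (n : ℕ → ℕ) : Prop :=
  ∀ R : ℝ, 0 < R → Summable fun k => |a k| * R ^ n k

noncomputable def gs (a : ℕ → ℝ) (n : ℕ → ℕ) : ℝ → ℝ := fun x => ∑' k, a k * x ^ n k

def da (a : ℕ → ℝ) (n : ℕ → ℕ) : ℕ → ℝ := fun k => a k * (n k : ℝ)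

def dn (n : ℕ → ℕ) : ℕ → ℕ := fun k => n k - 1

lemma Entire.summable {a : ℕ → ℝ} {n : ℕ → ℕ} (h : Entire a n) (x : ℝ) :
    Summable fun k => a k * x ^ n k := by
  have hR : (0:ℝ) < |x| + 1 := by positivity
  refine Summable.of_abs (((h _ hR).of_nonneg_of_le (fun k => abs_nonneg _) (fun k => ?_)))
  rw [abs_mul, abs_pow]
  exact mul_le_mul_of_nonneg_left
    (pow_le_pow_left₀ (abs_nonneg x) (by linarith) _) (abs_nonneg _)

lemma Entire.step {a : ℕ → ℝ} {n : ℕ → ℕ} (h : Entire a n) : Entire (da a n) (dn n) := by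
  intro R hR
  have hM : (0:ℝ) < max R 1 := lt_of_lt_of_le one_pos (le_max_right _ _)
  refine (h (2 * max R 1) (by positivity)).of_nonneg_of_le (fun k => by positivity) (fun k => ?_)
  have h1 : R ^ (n k - 1) ≤ (max R 1) ^ n k := by
    calc R ^ (n k - 1) ≤ (max R 1) ^ (n k - 1) := by gcongr; exact le_max_left _ _
      _ ≤ (max R 1) ^ n k := pow_le_pow_right₀ (le_max_right _ _) (Nat.sub_le _ _)
  have h2 : ((n k : ℕ) : ℝ) ≤ 2 ^ n k := by exact_mod_cast (Nat.lt_two_pow_self (n := n k)).le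
  calc |da a n k| * R ^ dn n k = |a k| * (((n k : ℕ):ℝ) * R ^ (n k - 1)) := by
        rw [da, abs_mul, Nat.abs_cast, dn]; ring
    _ ≤ |a k| * (2 ^ n k * (max R 1) ^ n k) := by
        refine mul_le_mul_of_nonneg_left ?_ (abs_nonneg _)
        exact mul_le_mul h2 h1 (by positivity) (by positivity)
    _ = |a k| * (2 * max R 1) ^ n k := by rw [mul_pow]

lemma Entire.hasDerivAt {a : ℕ → ℝ} {n : ℕ → ℕ} (h : Entire a n) (x : ℝ) :
    HasDerivAt (gs a n) (gs (da a n) (dn n) x) x := by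
  have hR1 : (1:ℝ) ≤ |x| + 1 := by linarith [abs_nonneg x]
  have hR : (0:ℝ) < |x| + 1 := by positivity
  have hmem : x ∈ Set.Ioo (-(|x| + 1)) (|x| + 1) := by
    constructor <;> [linarith [neg_abs_le x]; linarith [le_abs_self x]]
  show HasDerivAt (fun z => ∑' k, a k * z ^ n k)
    (∑' k, a k * (n k : ℝ) * x ^ (n k - 1)) x
  rw [show (∑' k, a k * (n k : ℝ) * x ^ (n k - 1))
      = ∑' k, a k * ((n k : ℝ) * x ^ (n k - 1)) from tsum_congr fun k => mul_assoc _ _ _]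
  refine hasDerivAt_tsum_of_isPreconnected
    (u := fun k => |a k| * (2 * (|x| + 1)) ^ n k)
    (h (2 * (|x| + 1)) (by positivity)) isOpen_Ioo
    ((convex_Ioo _ _).isPreconnected)
    (g' := fun k y => a k * ((n k : ℝ) * y ^ (n k - 1)))
    (fun k y _ => (hasDerivAt_pow (n k) y).const_mul (a k))
    (fun k y hy => ?_) hmem (h.summable x) hmem
  have hyabs : |y| ≤ |x| + 1 := by
    rw [abs_le]; exact ⟨hy.1.le, hy.2.le⟩
  have h1 : |y| ^ (n k - 1) ≤ (|x| + 1) ^ n k := by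
    calc |y| ^ (n k - 1) ≤ (|x| + 1) ^ (n k - 1) := by
          exact pow_le_pow_left₀ (abs_nonneg y) hyabs _
      _ ≤ (|x| + 1) ^ n k := pow_le_pow_right₀ hR1 (Nat.sub_le _ _)
  have h2 : ((n k : ℕ) : ℝ) ≤ 2 ^ n k := by exact_mod_cast (Nat.lt_two_pow_self (n := n k)).le
  calc ‖a k * ((n k : ℝ) * y ^ (n k - 1))‖ = |a k| * ((n k : ℝ) * |y| ^ (n k - 1)) := by
        rw [Real.norm_eq_abs, abs_mul, abs_mul, Nat.abs_cast, abs_pow]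
    _ ≤ |a k| * (2 ^ n k * (|x| + 1) ^ n k) := by
        refine mul_le_mul_of_nonneg_left ?_ (abs_nonneg _)
        exact mul_le_mul h2 h1 (by positivity) (by positivity)
    _ = |a k| * (2 * (|x| + 1)) ^ n k := by rw [mul_pow]

lemma Entire.deriv_gs {a : ℕ → ℝ} {n : ℕ → ℕ} (h : Entire a n) :
    _root_.deriv (gs a n) = gs (da a n) (dn n) :=
  funext fun x => (h.hasDerivAt x).deriv


/-! ### Coefficients for the Mullins profile -/

noncomputable def cc1 (m B : ℝ) : ℝ := m / (4 * Real.sqrt 2 * B ^ ((1:ℝ)/4) * Real.Gamma (3/4))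

noncomputable def cc2 (m B : ℝ) : ℝ := m * B ^ ((1:ℝ)/4) / (2 * Real.sqrt 2 * Real.Gamma (5/4))

noncomputable def p1 (B : ℝ) (k : ℕ) : ℝ :=
  poch (1/4) k /
    (poch (3/4) k * poch (5/4) k * poch (3/2) k * (Nat.factorial k : ℝ) * (256 * B) ^ k)

noncomputable def p2 (B : ℝ) (k : ℕ) : ℝ :=
  poch (-(1/4)) k /
    (poch (1/4) k * poch (1/2) k * poch (3/4) k * (Nat.factorial k : ℝ) * (256 * B) ^ k)

noncomputable def A1 (m B t : ℝ) (k : ℕ) : ℝ :=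
  -(cc1 m B * p1 B k) * t ^ (-(k:ℝ) - 1/4)

noncomputable def A2 (m B t : ℝ) (k : ℕ) : ℝ :=
  -(cc2 m B * p2 B k) * t ^ ((1:ℝ)/4 - (k:ℝ))

noncomputable def A0 (m : ℝ) (k : ℕ) : ℝ := if k = 0 then m / 2 else 0

def N1 : ℕ → ℕ := fun k => 4 * k + 2
def N2 : ℕ → ℕ := fun k => 4 * k
def N0 : ℕ → ℕ := fun _ => 1

lemma abs_p1_le {B : ℝ} (hB : 0 < B) (k : ℕ) :
    |p1 B k| ≤ ((256 * B)⁻¹) ^ k / (Nat.factorial k : ℝ) := by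
  have h34 := poch_pos (show (0:ℝ) < 3/4 by norm_num) k
  have h54 := poch_pos (show (0:ℝ) < 5/4 by norm_num) k
  have h32 := poch_pos (show (0:ℝ) < 3/2 by norm_num) k
  have hf : (0:ℝ) < (Nat.factorial k : ℝ) := by exact_mod_cast Nat.factorial_pos k
  have hp : (0:ℝ) < (256 * B) ^ k := by positivity
  have hden : (0:ℝ) < poch (3/4) k * poch (5/4) k * poch (3/2) k *
      (Nat.factorial k : ℝ) * (256 * B) ^ k :=
    mul_pos (mul_pos (mul_pos (mul_pos h34 h54) h32) hf) hp
  have hnum : |poch (1/4) k| ≤ poch (3/4) k := by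
    refine abs_poch_le ?_ k
    rw [abs_of_nonneg (by norm_num : (0:ℝ) ≤ 1/4)]; norm_num
  have h54' := one_le_poch (show (1:ℝ) ≤ 5/4 by norm_num) k
  have h32' := one_le_poch (show (1:ℝ) ≤ 3/2 by norm_num) k
  rw [p1, abs_div, abs_of_pos hden, div_le_div_iff₀ hden hf]
  have hinv : ((256 * B)⁻¹) ^ k * (256 * B) ^ k = 1 := by
    rw [← mul_pow, inv_mul_cancel₀ (by positivity), one_pow]
  have key : ((256 * B)⁻¹) ^ k *
      (poch (3/4) k * poch (5/4) k * poch (3/2) k * (Nat.factorial k : ℝ) * (256 * B) ^ k)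
      = poch (3/4) k * poch (5/4) k * poch (3/2) k * (Nat.factorial k : ℝ) := by
    calc ((256 * B)⁻¹) ^ k *
        (poch (3/4) k * poch (5/4) k * poch (3/2) k * (Nat.factorial k : ℝ) * (256 * B) ^ k)
        = poch (3/4) k * poch (5/4) k * poch (3/2) k * (Nat.factorial k : ℝ) *
            (((256 * B)⁻¹) ^ k * (256 * B) ^ k) := by ring
      _ = _ := by rw [hinv, mul_one]
  rw [key]
  have step1 : |poch (1/4) k| * (Nat.factorial k : ℝ) ≤ poch (3/4) k * (Nat.factorial k : ℝ) :=
    mul_le_mul_of_nonneg_right hnum hf.le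
  have h1le : (1:ℝ) ≤ poch (5/4) k * poch (3/2) k := by nlinarith
  nlinarith [mul_nonneg (mul_pos h34 hf).le (sub_nonneg.2 h1le)]

lemma abs_p2_le {B : ℝ} (hB : 0 < B) (k : ℕ) :
    |p2 B k| ≤ (8/3) * ((256 * B)⁻¹) ^ k / (Nat.factorial k : ℝ) := by
  have h14 := poch_pos (show (0:ℝ) < 1/4 by norm_num) k
  have h12 := poch_pos (show (0:ℝ) < 1/2 by norm_num) k
  have h34 := poch_pos (show (0:ℝ) < 3/4 by norm_num) k
  have hf : (0:ℝ) < (Nat.factorial k : ℝ) := by exact_mod_cast Nat.factorial_pos k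
  have hp : (0:ℝ) < (256 * B) ^ k := by positivity
  have hden : (0:ℝ) < poch (1/4) k * poch (1/2) k * poch (3/4) k *
      (Nat.factorial k : ℝ) * (256 * B) ^ k :=
    mul_pos (mul_pos (mul_pos (mul_pos h14 h12) h34) hf) hp
  have hnum : |poch (-(1/4)) k| ≤ poch (1/4) k := by
    refine abs_poch_le ?_ k
    rw [abs_neg, abs_of_nonneg (by norm_num : (0:ℝ) ≤ 1/4)]
  have h12' := le_poch (show (0:ℝ) < 1/2 by norm_num) (by norm_num) k
  have h34' := le_poch (show (0:ℝ) < 3/4 by norm_num) (by norm_num) k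
  rw [p2, abs_div, abs_of_pos hden, div_le_div_iff₀ hden hf]
  have hinv : ((256 * B)⁻¹) ^ k * (256 * B) ^ k = 1 := by
    rw [← mul_pow, inv_mul_cancel₀ (by positivity), one_pow]
  have key : (8/3) * ((256 * B)⁻¹) ^ k *
      (poch (1/4) k * poch (1/2) k * poch (3/4) k * (Nat.factorial k : ℝ) * (256 * B) ^ k)
      = (8/3) * (poch (1/4) k * poch (1/2) k * poch (3/4) k * (Nat.factorial k : ℝ)) := by
    calc (8/3) * ((256 * B)⁻¹) ^ k *
        (poch (1/4) k * poch (1/2) k * poch (3/4) k * (Nat.factorial k : ℝ) * (256 * B) ^ k)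
        = (8/3) * (poch (1/4) k * poch (1/2) k * poch (3/4) k * (Nat.factorial k : ℝ)) *
            (((256 * B)⁻¹) ^ k * (256 * B) ^ k) := by ring
      _ = _ := by rw [hinv, mul_one]
  rw [key]
  have step1 : |poch (-(1/4)) k| * (Nat.factorial k : ℝ) ≤ poch (1/4) k * (Nat.factorial k : ℝ) :=
    mul_le_mul_of_nonneg_right hnum hf.le
  have h38 : (3/8 : ℝ) ≤ poch (1/2) k * poch (3/4) k := by nlinarith
  nlinarith [mul_nonneg (mul_pos h14 hf).le (sub_nonneg.2 h38)]

/-- Generic summability from a factorial bound. -/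
lemma summable_of_factorial_bound (u : ℕ → ℝ) (K v : ℝ)
    (hu : ∀ k, |u k| ≤ K * v ^ k / (Nat.factorial k : ℝ)) : Summable fun k => |u k| := by
  refine ((Real.summable_pow_div_factorial v).mul_left K).of_nonneg_of_le
    (fun k => abs_nonneg _) (fun k => ?_)
  calc |u k| ≤ K * v ^ k / (Nat.factorial k : ℝ) := hu k
    _ = K * (v ^ k / (Nat.factorial k : ℝ)) := by ring

lemma entire_of_factorial_bound (a : ℕ → ℝ) (j : ℕ) (K v : ℝ) (hv : 0 ≤ v)
    (ha : ∀ k, |a k| ≤ K * v ^ k / (Nat.factorial k : ℝ)) :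
    Entire a (fun k => 4 * k + j) := by
  intro R hR
  have h1R : (1:ℝ) ≤ max R 1 := le_max_right _ _
  have h0R : (0:ℝ) < max R 1 := by linarith
  refine (summable_of_factorial_bound _ (K * (max R 1) ^ j) (v * (max R 1) ^ 4) ?_).congr
    (fun k => abs_of_nonneg (by positivity))
  intro k
  have hb := ha k
  have hf : (0:ℝ) < (Nat.factorial k : ℝ) := by exact_mod_cast Nat.factorial_pos k
  have hRle : R ^ (4 * k + j) ≤ (max R 1) ^ (4 * k + j) :=
    pow_le_pow_left₀ hR.le (le_max_left _ _) _
  have habs : |(|a k| * R ^ (4 * k + j))| = |a k| * R ^ (4 * k + j) := by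
    have : (0:ℝ) ≤ R ^ (4 * k + j) := by positivity
    rw [abs_of_nonneg (by positivity)]
  rw [habs]
  calc |a k| * R ^ (4 * k + j)
      ≤ (K * v ^ k / (Nat.factorial k : ℝ)) * (max R 1) ^ (4 * k + j) := by
        refine mul_le_mul hb (hRle) (by positivity) ?_
        calc (0:ℝ) ≤ |a k| / 1 := by positivity
          _ ≤ K * v ^ k / (Nat.factorial k : ℝ) := by
            refine le_trans ?_ hb
            simp
    _ = K * (max R 1) ^ j * (v * (max R 1) ^ 4) ^ k / (Nat.factorial k : ℝ) := by
        rw [pow_add, pow_mul, mul_pow]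
        ring

lemma hexp1 {t : ℝ} (ht : 0 < t) (k : ℕ) :
    t ^ (-(k:ℝ) - 1/4) = t ^ (-(1:ℝ)/4) * (t⁻¹) ^ k := by
  rw [show -(k:ℝ) - 1/4 = (-(1:ℝ)/4) + (-(k:ℝ)) by ring, Real.rpow_add ht,
    Real.rpow_neg ht.le (k:ℝ), Real.rpow_natCast, inv_pow]

lemma hexp2 {t : ℝ} (ht : 0 < t) (k : ℕ) :
    t ^ ((1:ℝ)/4 - (k:ℝ)) = t ^ ((1:ℝ)/4) * (t⁻¹) ^ k := by
  rw [show (1:ℝ)/4 - (k:ℝ) = ((1:ℝ)/4) + (-(k:ℝ)) by ring, Real.rpow_add ht,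
    Real.rpow_neg ht.le (k:ℝ), Real.rpow_natCast, inv_pow]

lemma ent1 {m B t : ℝ} (hB : 0 < B) (ht : 0 < t) : Entire (A1 m B t) N1 := by
  have hb : ∀ k, |A1 m B t k| ≤
      (|cc1 m B| * t ^ (-(1:ℝ)/4)) * ((256 * B * t)⁻¹) ^ k / (Nat.factorial k : ℝ) := by
    intro k
    have hfp : (0:ℝ) < (Nat.factorial k : ℝ) := by exact_mod_cast Nat.factorial_pos k
    calc |A1 m B t k| = |cc1 m B| * |p1 B k| * t ^ (-(k:ℝ) - 1/4) := by
          rw [A1, abs_mul, abs_neg, abs_mul, abs_of_pos (Real.rpow_pos_of_pos ht _)]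
      _ ≤ |cc1 m B| * (((256 * B)⁻¹) ^ k / (Nat.factorial k : ℝ)) * t ^ (-(k:ℝ) - 1/4) := by
          have := abs_p1_le hB k
          have hrp : (0:ℝ) ≤ t ^ (-(k:ℝ) - 1/4) := (Real.rpow_pos_of_pos ht _).le
          exact mul_le_mul_of_nonneg_right
            (mul_le_mul_of_nonneg_left this (abs_nonneg _)) hrp
      _ = (|cc1 m B| * t ^ (-(1:ℝ)/4)) * ((256 * B * t)⁻¹) ^ k / (Nat.factorial k : ℝ) := by
          rw [hexp1 ht k, show ((256 * B * t):ℝ)⁻¹ = (256 * B)⁻¹ * t⁻¹ by rw [mul_inv],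
            mul_pow]
          ring
  exact entire_of_factorial_bound _ 2 _ _ (by positivity) hb

lemma ent2 {m B t : ℝ} (hB : 0 < B) (ht : 0 < t) : Entire (A2 m B t) N2 := by
  have hb : ∀ k, |A2 m B t k| ≤
      (|cc2 m B| * (8/3) * t ^ ((1:ℝ)/4)) * ((256 * B * t)⁻¹) ^ k / (Nat.factorial k : ℝ) := by
    intro k
    have hfp : (0:ℝ) < (Nat.factorial k : ℝ) := by exact_mod_cast Nat.factorial_pos k
    calc |A2 m B t k| = |cc2 m B| * |p2 B k| * t ^ ((1:ℝ)/4 - (k:ℝ)) := by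
          rw [A2, abs_mul, abs_neg, abs_mul, abs_of_pos (Real.rpow_pos_of_pos ht _)]
      _ ≤ |cc2 m B| * ((8/3) * ((256 * B)⁻¹) ^ k / (Nat.factorial k : ℝ)) *
            t ^ ((1:ℝ)/4 - (k:ℝ)) := by
          have := abs_p2_le hB k
          have hrp : (0:ℝ) ≤ t ^ ((1:ℝ)/4 - (k:ℝ)) := (Real.rpow_pos_of_pos ht _).le
          exact mul_le_mul_of_nonneg_right
            (mul_le_mul_of_nonneg_left this (abs_nonneg _)) hrp
      _ = (|cc2 m B| * (8/3) * t ^ ((1:ℝ)/4)) * ((256 * B * t)⁻¹) ^ k /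
            (Nat.factorial k : ℝ) := by
          rw [hexp2 ht k, show ((256 * B * t):ℝ)⁻¹ = (256 * B)⁻¹ * t⁻¹ by rw [mul_inv],
            mul_pow]
          ring
  exact entire_of_factorial_bound _ 0 _ _ (by positivity) hb

lemma ent0 {m : ℝ} : Entire (A0 m) N0 := by
  intro R hR
  refine summable_of_ne_finset_zero (s := {0}) (fun k hk => ?_)
  have hk0 : k ≠ 0 := by simpa using hk
  simp [A0, hk0]

lemma gs_A0 (m : ℝ) (y : ℝ) : gs (A0 m) N0 y = m / 2 * y := by
  rw [gs, tsum_eq_single 0 (fun b hb => by simp [A0, hb])]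
  simp [A0, N0]

lemma rep (m B x s : ℝ) (hB : 0 < B) (hs : 0 < s) :
    mullinsY m B x s = gs (A0 m) N0 x + gs (A1 m B s) N1 x + gs (A2 m B s) N2 x := by
  have hsqrt : (0:ℝ) < Real.sqrt 2 := Real.sqrt_pos.2 (by norm_num)
  have hB14 : (0:ℝ) < B ^ ((1:ℝ)/4) := Real.rpow_pos_of_pos hB _
  have hs14 : (0:ℝ) < s ^ ((1:ℝ)/4) := Real.rpow_pos_of_pos hs _
  have hG34 : (0:ℝ) < Real.Gamma (3/4) := Real.Gamma_pos_of_pos (by norm_num)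
  have hG54 : (0:ℝ) < Real.Gamma (5/4) := Real.Gamma_pos_of_pos (by norm_num)
  have hBs : (B * s) ^ ((1:ℝ)/4) = B ^ ((1:ℝ)/4) * s ^ ((1:ℝ)/4) :=
    Real.mul_rpow hB.le hs.le
  have h1 : gs (A1 m B s) N1 x =
      -(m * x ^ 2 / (4 * Real.sqrt 2 * (B * s) ^ ((1:ℝ)/4) * Real.Gamma (3/4)) *
        F13 (1/4) (3/4) (5/4) (3/2) (x ^ 4 / (256 * B * s))) := by
    rw [F13, ← tsum_mul_left, ← tsum_neg, gs]
    refine tsum_congr fun k => ?_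
    have h34 := (poch_pos (show (0:ℝ) < 3/4 by norm_num) k).ne'
    have h54 := (poch_pos (show (0:ℝ) < 5/4 by norm_num) k).ne'
    have h32 := (poch_pos (show (0:ℝ) < 3/2 by norm_num) k).ne'
    have hfp : ((Nat.factorial k : ℝ)) ≠ 0 := by
      exact_mod_cast (Nat.factorial_pos k).ne'
    have hsk : (s:ℝ) ^ k ≠ 0 := by positivity
    have hBk : ((256 * B):ℝ) ^ k ≠ 0 := by positivity
    rw [A1, N1, hexp1 hs k, hBs, p1, cc1]
    rw [div_pow, show ((x:ℝ) ^ 4) ^ k = x ^ (4 * k) by rw [← pow_mul],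
      show ((256 * B * s):ℝ) ^ k = (256 * B) ^ k * s ^ k from mul_pow _ _ _,
      pow_add, inv_pow, show (s:ℝ) ^ (-(1:ℝ)/4) = (s ^ ((1:ℝ)/4))⁻¹ by
        rw [show (-(1:ℝ)/4) = -((1:ℝ)/4) by ring, Real.rpow_neg hs.le]]
    field_simp
  have h2 : gs (A2 m B s) N2 x =
      -(m * (B * s) ^ ((1:ℝ)/4) / (2 * Real.sqrt 2 * Real.Gamma (5/4)) *
        F13 (-1/4) (1/4) (1/2) (3/4) (x ^ 4 / (256 * B * s))) := by
    rw [F13, ← tsum_mul_left, ← tsum_neg, gs]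
    refine tsum_congr fun k => ?_
    have h14 := (poch_pos (show (0:ℝ) < 1/4 by norm_num) k).ne'
    have h12 := (poch_pos (show (0:ℝ) < 1/2 by norm_num) k).ne'
    have h34 := (poch_pos (show (0:ℝ) < 3/4 by norm_num) k).ne'
    have hfp : ((Nat.factorial k : ℝ)) ≠ 0 := by
      exact_mod_cast (Nat.factorial_pos k).ne'
    have hsk : (s:ℝ) ^ k ≠ 0 := by positivity
    have hBk : ((256 * B):ℝ) ^ k ≠ 0 := by positivity
    rw [A2, N2, hexp2 hs k, hBs, p2, cc2]
    rw [div_pow, show ((x:ℝ) ^ 4) ^ k = x ^ (4 * k) by rw [← pow_mul],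
      show ((256 * B * s):ℝ) ^ k = (256 * B) ^ k * s ^ k from mul_pow _ _ _,
      inv_pow, show poch (-1/4) k = poch (-(1/4)) k by norm_num]
    field_simp
  rw [mullinsY, gs_A0, h1, h2]
  ring

lemma termid1 (m B t x : ℝ) (hB : 0 < B) (ht : 0 < t) (k : ℕ) :
    -(cc1 m B * p1 B k) * ((-(k:ℝ) - 1/4) * t ^ ((-(k:ℝ) - 1/4) - 1)) * x ^ N1 k
      = -B * (da (da (da (da (A1 m B t) N1) (dn N1)) (dn (dn N1))) (dn (dn (dn N1))) (k+1) *
          x ^ (dn (dn (dn (dn N1))) (k+1))) := by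
  simp only [da, dn, N1]
  rw [show 4*(k+1)+2 = 4*k+6 from by omega, show 4*k+6-1 = 4*k+5 from by omega,
    show 4*k+5-1 = 4*k+4 from by omega, show 4*k+4-1 = 4*k+3 from by omega,
    show 4*k+3-1 = 4*k+2 from by omega]
  rw [A1, show -(((k+1 : ℕ)):ℝ) - 1/4 = (-(k:ℝ) - 1/4) - 1 from by push_cast; ring]
  simp only [p1, poch_succ, Nat.factorial_succ, pow_succ]
  have h34 := (poch_pos (show (0:ℝ) < 3/4 by norm_num) k).ne'
  have h54 := (poch_pos (show (0:ℝ) < 5/4 by norm_num) k).ne'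
  have h32 := (poch_pos (show (0:ℝ) < 3/2 by norm_num) k).ne'
  have hfp : ((Nat.factorial k : ℝ)) ≠ 0 := by exact_mod_cast (Nat.factorial_pos k).ne'
  have hk1 : ((k:ℝ) + 1) ≠ 0 := by positivity
  have hBk : ((256 * B):ℝ) ^ k ≠ 0 := by positivity
  have hB' : (256 * B : ℝ) ≠ 0 := by positivity
  have e34 : ((3:ℝ)/4 + k) ≠ 0 := by positivity
  have e54 : ((5:ℝ)/4 + k) ≠ 0 := by positivity
  have e32 : ((3:ℝ)/2 + k) ≠ 0 := by positivity
  push_cast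
  field_simp
  ring

lemma termid2 (m B t x : ℝ) (hB : 0 < B) (ht : 0 < t) (k : ℕ) :
    -(cc2 m B * p2 B k) * (((1:ℝ)/4 - (k:ℝ)) * t ^ (((1:ℝ)/4 - (k:ℝ)) - 1)) * x ^ N2 k
      = -B * (da (da (da (da (A2 m B t) N2) (dn N2)) (dn (dn N2))) (dn (dn (dn N2))) (k+1) *
          x ^ (dn (dn (dn (dn N2))) (k+1))) := by
  simp only [da, dn, N2]
  rw [show 4*(k+1) = 4*k+4 from by omega, show 4*k+4-1 = 4*k+3 from by omega,
    show 4*k+3-1 = 4*k+2 from by omega, show 4*k+2-1 = 4*k+1 from by omega,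
    show 4*k+1-1 = 4*k from by omega]
  rw [A2, show (1:ℝ)/4 - (((k+1 : ℕ)):ℝ) = ((1:ℝ)/4 - (k:ℝ)) - 1 from by push_cast; ring]
  simp only [p2, poch_succ, Nat.factorial_succ, pow_succ]
  have h14 := (poch_pos (show (0:ℝ) < 1/4 by norm_num) k).ne'
  have h12 := (poch_pos (show (0:ℝ) < 1/2 by norm_num) k).ne'
  have h34 := (poch_pos (show (0:ℝ) < 3/4 by norm_num) k).ne'
  have hfp : ((Nat.factorial k : ℝ)) ≠ 0 := by exact_mod_cast (Nat.factorial_pos k).ne'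
  have hk1 : ((k:ℝ) + 1) ≠ 0 := by positivity
  have hBk : ((256 * B):ℝ) ^ k ≠ 0 := by positivity
  have hB' : (256 * B : ℝ) ≠ 0 := by positivity
  have e14 : ((1:ℝ)/4 + k) ≠ 0 := by positivity
  have e12 : ((1:ℝ)/2 + k) ≠ 0 := by positivity
  have e34' : ((3:ℝ)/4 + k) ≠ 0 := by positivity
  push_cast
  field_simp
  ring

lemma cast_succ_le (k : ℕ) : ((k:ℝ) + 1/2) ≤ 2 * 2 ^ k := by
  induction k with
  | zero => norm_num
  | succ n ih =>
    have h2 : (1:ℝ) ≤ 2 ^ n := one_le_pow₀ (by norm_num)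
    push_cast
    calc ((n:ℝ) + 1) + 1/2 = ((n:ℝ) + 1/2) + 1 := by ring
      _ ≤ 2 * 2 ^ n + 2 * 2 ^ n := by linarith
      _ = 2 * 2 ^ (n + 1) := by ring

lemma hasDerivAt_T1 (m B x t : ℝ) (hB : 0 < B) (ht : 0 < t) :
    HasDerivAt (fun s => gs (A1 m B s) N1 x)
      (∑' k, -(cc1 m B * p1 B k) * ((-(k:ℝ) - 1/4) * t ^ ((-(k:ℝ) - 1/4) - 1)) * x ^ N1 k) t := by
  have ht2 : (0:ℝ) < t/2 := by positivity
  show HasDerivAt (fun s => ∑' k, A1 m B s k * x ^ N1 k)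
    (∑' k, -(cc1 m B * p1 B k) * ((-(k:ℝ) - 1/4) * t ^ ((-(k:ℝ) - 1/4) - 1)) * x ^ N1 k) t
  refine hasDerivAt_tsum_of_isPreconnected
    (u := fun k => (|cc1 m B| * 2 * (t/2) ^ (-(5:ℝ)/4) * |x| ^ 2) *
      (((256 * B)⁻¹ * (t/2)⁻¹ * (2 * |x| ^ 4)) ^ k / (Nat.factorial k : ℝ)))
    (g := fun k s => A1 m B s k * x ^ N1 k)
    (g' := fun k s => -(cc1 m B * p1 B k) * ((-(k:ℝ) - 1/4) * s ^ ((-(k:ℝ) - 1/4) - 1)) * x ^ N1 k)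
    (t := Set.Ioi (t/2))
    ?_ isOpen_Ioi ((convex_Ioi _).isPreconnected)
    (fun k s' hs' => ?_) (fun k s' hs' => ?_)
    (Set.mem_Ioi.2 (by linarith)) ((ent1 hB ht).summable x) (Set.mem_Ioi.2 (by linarith))
  · exact (Real.summable_pow_div_factorial _).mul_left _
  · have hs'pos : 0 < s' := lt_trans ht2 hs'
    exact ((Real.hasDerivAt_rpow_const (x := s') (p := -(k:ℝ) - 1/4)
      (Or.inl hs'pos.ne')).const_mul (-(cc1 m B * p1 B k))).mul_const (x ^ N1 k)
  · -- bound
    have hs'pos : 0 < s' := lt_trans ht2 hs'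
    have hrneg : (-(k:ℝ) - 1/4) - 1 ≤ 0 := by
      have : (0:ℝ) ≤ (k:ℝ) := Nat.cast_nonneg k
      linarith
    have hmono : s' ^ ((-(k:ℝ) - 1/4) - 1) ≤ (t/2) ^ ((-(k:ℝ) - 1/4) - 1) :=
      Real.rpow_le_rpow_of_nonpos ht2 (le_of_lt hs') hrneg
    have habs : |(-(k:ℝ) - 1/4)| = (k:ℝ) + 1/4 := by
      rw [abs_of_nonpos (by linarith [Nat.cast_nonneg (α := ℝ) k])]; ring
    have hsplit : (t/2) ^ ((-(k:ℝ) - 1/4) - 1) = (t/2) ^ (-(5:ℝ)/4) * ((t/2)⁻¹) ^ k := by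
      rw [show (-(k:ℝ) - 1/4) - 1 = (-(5:ℝ)/4) + (-(k:ℝ)) by ring, Real.rpow_add ht2,
        Real.rpow_neg ht2.le (k:ℝ), Real.rpow_natCast, inv_pow]
    have hb1 : |p1 B k| ≤ ((256 * B)⁻¹) ^ k / (Nat.factorial k : ℝ) := abs_p1_le hB k
    have hk2 : (k:ℝ) + 1/4 ≤ 2 * 2 ^ k := by
      have := cast_succ_le k
      linarith
    have hfp : (0:ℝ) < (Nat.factorial k : ℝ) := by exact_mod_cast Nat.factorial_pos k
    calc ‖-(cc1 m B * p1 B k) * ((-(k:ℝ) - 1/4) * s' ^ ((-(k:ℝ) - 1/4) - 1)) * x ^ N1 k‖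
        = |cc1 m B| * |p1 B k| * (((k:ℝ) + 1/4) * s' ^ ((-(k:ℝ) - 1/4) - 1)) *
            (|x| ^ 2 * (|x| ^ 4) ^ k) := by
          rw [Real.norm_eq_abs, abs_mul, abs_mul, abs_neg, abs_mul, abs_mul, habs, abs_pow,
            N1, show |x| ^ (4 * k + 2) = |x| ^ 2 * (|x| ^ 4) ^ k by
              rw [← pow_mul, ← pow_add]; ring_nf,
            abs_of_pos (Real.rpow_pos_of_pos hs'pos _)]
      _ ≤ |cc1 m B| * (((256 * B)⁻¹) ^ k / (Nat.factorial k : ℝ)) *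
            ((2 * 2 ^ k) * ((t/2) ^ (-(5:ℝ)/4) * ((t/2)⁻¹) ^ k)) * (|x| ^ 2 * (|x| ^ 4) ^ k) := by
          rw [hsplit] at hmono
          refine mul_le_mul_of_nonneg_right ?_ (by positivity)
          refine mul_le_mul (mul_le_mul_of_nonneg_left hb1 (abs_nonneg _)) ?_
            (by positivity) (by positivity)
          refine mul_le_mul hk2 hmono (by positivity) (by positivity)
      _ = (|cc1 m B| * 2 * (t/2) ^ (-(5:ℝ)/4) * |x| ^ 2) *
            (((256 * B)⁻¹ * (t/2)⁻¹ * (2 * |x| ^ 4)) ^ k / (Nat.factorial k : ℝ)) := by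
          rw [mul_pow, mul_pow, mul_pow]
          ring

lemma hasDerivAt_T2 (m B x t : ℝ) (hB : 0 < B) (ht : 0 < t) :
    HasDerivAt (fun s => gs (A2 m B s) N2 x)
      (∑' k, -(cc2 m B * p2 B k) * (((1:ℝ)/4 - (k:ℝ)) * t ^ (((1:ℝ)/4 - (k:ℝ)) - 1)) * x ^ N2 k)
      t := by
  have ht2 : (0:ℝ) < t/2 := by positivity
  show HasDerivAt (fun s => ∑' k, A2 m B s k * x ^ N2 k)
    (∑' k, -(cc2 m B * p2 B k) * (((1:ℝ)/4 - (k:ℝ)) * t ^ (((1:ℝ)/4 - (k:ℝ)) - 1)) * x ^ N2 k) t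
  refine hasDerivAt_tsum_of_isPreconnected
    (u := fun k => (|cc2 m B| * (8/3) * 2 * (t/2) ^ (-(3:ℝ)/4)) *
      (((256 * B)⁻¹ * (t/2)⁻¹ * (2 * |x| ^ 4)) ^ k / (Nat.factorial k : ℝ)))
    (g := fun k s => A2 m B s k * x ^ N2 k)
    (g' := fun k s => -(cc2 m B * p2 B k) * (((1:ℝ)/4 - (k:ℝ)) * s ^ (((1:ℝ)/4 - (k:ℝ)) - 1)) * x ^ N2 k)
    (t := Set.Ioi (t/2))
    ?_ isOpen_Ioi ((convex_Ioi _).isPreconnected)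
    (fun k s' hs' => ?_) (fun k s' hs' => ?_)
    (Set.mem_Ioi.2 (by linarith)) ((ent2 hB ht).summable x) (Set.mem_Ioi.2 (by linarith))
  · exact (Real.summable_pow_div_factorial _).mul_left _
  · have hs'pos : 0 < s' := lt_trans ht2 hs'
    exact ((Real.hasDerivAt_rpow_const (x := s') (p := (1:ℝ)/4 - (k:ℝ))
      (Or.inl hs'pos.ne')).const_mul (-(cc2 m B * p2 B k))).mul_const (x ^ N2 k)
  · have hs'pos : 0 < s' := lt_trans ht2 hs'
    have hrneg : ((1:ℝ)/4 - (k:ℝ)) - 1 ≤ 0 := by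
      have : (0:ℝ) ≤ (k:ℝ) := Nat.cast_nonneg k
      linarith
    have hmono : s' ^ (((1:ℝ)/4 - (k:ℝ)) - 1) ≤ (t/2) ^ (((1:ℝ)/4 - (k:ℝ)) - 1) :=
      Real.rpow_le_rpow_of_nonpos ht2 (le_of_lt hs') hrneg
    have habs : |((1:ℝ)/4 - (k:ℝ))| ≤ (k:ℝ) + 1/2 := by
      rw [abs_le]
      constructor <;> [skip; skip] <;>
        (have : (0:ℝ) ≤ (k:ℝ) := Nat.cast_nonneg k) <;> linarith
    have hsplit : (t/2) ^ (((1:ℝ)/4 - (k:ℝ)) - 1) = (t/2) ^ (-(3:ℝ)/4) * ((t/2)⁻¹) ^ k := by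
      rw [show ((1:ℝ)/4 - (k:ℝ)) - 1 = (-(3:ℝ)/4) + (-(k:ℝ)) by ring, Real.rpow_add ht2,
        Real.rpow_neg ht2.le (k:ℝ), Real.rpow_natCast, inv_pow]
    have hb2 : |p2 B k| ≤ (8/3) * ((256 * B)⁻¹) ^ k / (Nat.factorial k : ℝ) := abs_p2_le hB k
    have hk2 : (k:ℝ) + 1/2 ≤ 2 * 2 ^ k := cast_succ_le k
    have hfp : (0:ℝ) < (Nat.factorial k : ℝ) := by exact_mod_cast Nat.factorial_pos k
    calc ‖-(cc2 m B * p2 B k) * (((1:ℝ)/4 - (k:ℝ)) * s' ^ (((1:ℝ)/4 - (k:ℝ)) - 1)) * x ^ N2 k‖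
        = |cc2 m B| * |p2 B k| * (|(1:ℝ)/4 - (k:ℝ)| * s' ^ (((1:ℝ)/4 - (k:ℝ)) - 1)) *
            (|x| ^ 4) ^ k := by
          rw [Real.norm_eq_abs, abs_mul, abs_mul, abs_neg, abs_mul, abs_mul, abs_pow,
            N2, show |x| ^ (4 * k) = (|x| ^ 4) ^ k by rw [← pow_mul],
            abs_of_pos (Real.rpow_pos_of_pos hs'pos _)]
      _ ≤ |cc2 m B| * ((8/3) * ((256 * B)⁻¹) ^ k / (Nat.factorial k : ℝ)) *
            ((2 * 2 ^ k) * ((t/2) ^ (-(3:ℝ)/4) * ((t/2)⁻¹) ^ k)) * (|x| ^ 4) ^ k := by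
          rw [hsplit] at hmono
          refine mul_le_mul_of_nonneg_right ?_ (by positivity)
          refine mul_le_mul (mul_le_mul_of_nonneg_left hb2 (abs_nonneg _)) ?_
            (by positivity) (by positivity)
          refine mul_le_mul (habs.trans hk2) hmono (by positivity) (by positivity)
      _ = (|cc2 m B| * (8/3) * 2 * (t/2) ^ (-(3:ℝ)/4)) *
            (((256 * B)⁻¹ * (t/2)⁻¹ * (2 * |x| ^ 4)) ^ k / (Nat.factorial k : ℝ)) := by
          rw [mul_pow, mul_pow, mul_pow]
          ring

end MullinsAux

open MullinsAux in
/-- The Mullins profile `y₀` satisfies `∂y₀/∂t = -B ∂⁴y₀/∂x⁴` for `x > 0`, `t > 0`. -/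
theorem mullinsY_satisfies_mullins_equation (m B : ℝ) (hB : 0 < B)
    (x t : ℝ) (hx : 0 < x) (ht : 0 < t) :
    deriv (fun s : ℝ => mullinsY m B x s) t
      = -B * iteratedDeriv 4 (fun x' : ℝ => mullinsY m B x' t) x := by
  have hE0 : Entire (A0 m) N0 := ent0
  have hE1 : Entire (A1 m B t) N1 := ent1 hB ht
  have hE2 : Entire (A2 m B t) N2 := ent2 hB ht
  -- Step rewriting for derivatives of triple sums
  have hDstep : ∀ (b0 b1 b2 : ℕ → ℝ) (m0 m1 m2 : ℕ → ℕ),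
      Entire b0 m0 → Entire b1 m1 → Entire b2 m2 →
      deriv (fun y => gs b0 m0 y + gs b1 m1 y + gs b2 m2 y)
        = fun y => gs (da b0 m0) (dn m0) y + gs (da b1 m1) (dn m1) y + gs (da b2 m2) (dn m2) y :=
    fun b0 b1 b2 m0 m1 m2 h0 h1 h2 => funext fun y =>
      (((h0.hasDerivAt y).add (h1.hasDerivAt y)).add (h2.hasDerivAt y)).deriv
  have hfun : (fun x' : ℝ => mullinsY m B x' t)
      = fun x' => gs (A0 m) N0 x' + gs (A1 m B t) N1 x' + gs (A2 m B t) N2 x' :=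
    funext fun x' => rep m B x' t hB ht
  -- compute the fourth x-derivative
  have h4 : iteratedDeriv 4 (fun x' : ℝ => mullinsY m B x' t) x
      = gs (da (da (da (da (A0 m) N0) (dn N0)) (dn (dn N0))) (dn (dn (dn N0))))
          (dn (dn (dn (dn N0)))) x
        + gs (da (da (da (da (A1 m B t) N1) (dn N1)) (dn (dn N1))) (dn (dn (dn N1))))
          (dn (dn (dn (dn N1)))) x
        + gs (da (da (da (da (A2 m B t) N2) (dn N2)) (dn (dn N2))) (dn (dn (dn N2))))
          (dn (dn (dn (dn N2)))) x := by
    rw [hfun, show (4:ℕ) = 3+1 from rfl, iteratedDeriv_succ,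
      show (3:ℕ) = 2+1 from rfl, iteratedDeriv_succ,
      show (2:ℕ) = 1+1 from rfl, iteratedDeriv_succ,
      show (1:ℕ) = 0+1 from rfl, iteratedDeriv_succ, iteratedDeriv_zero]
    rw [hDstep _ _ _ _ _ _ hE0 hE1 hE2,
      hDstep _ _ _ _ _ _ hE0.step hE1.step hE2.step,
      hDstep _ _ _ _ _ _ hE0.step.step hE1.step.step hE2.step.step,
      hDstep _ _ _ _ _ _ hE0.step.step.step hE1.step.step.step hE2.step.step.step]
  -- compute the time derivative
  have hev : (fun s : ℝ => mullinsY m B x s)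
      =ᶠ[nhds t] fun s => gs (A0 m) N0 x + gs (A1 m B s) N1 x + gs (A2 m B s) N2 x := by
    filter_upwards [Ioi_mem_nhds ht] with s hs
    exact rep m B x s hB hs
  have Htot : HasDerivAt
      (fun s => gs (A0 m) N0 x + gs (A1 m B s) N1 x + gs (A2 m B s) N2 x)
      (0 + (∑' k, -(cc1 m B * p1 B k) * ((-(k:ℝ) - 1/4) * t ^ ((-(k:ℝ) - 1/4) - 1)) * x ^ N1 k)
        + (∑' k, -(cc2 m B * p2 B k) * (((1:ℝ)/4 - (k:ℝ)) * t ^ (((1:ℝ)/4 - (k:ℝ)) - 1)) *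
            x ^ N2 k)) t :=
    ((hasDerivAt_const t (gs (A0 m) N0 x)).add (hasDerivAt_T1 m B x t hB ht)).add
      (hasDerivAt_T2 m B x t hB ht)
  rw [hev.deriv_eq, Htot.deriv, h4]
  -- the zeroth family vanishes after four derivatives
  have hG0 : gs (da (da (da (da (A0 m) N0) (dn N0)) (dn (dn N0))) (dn (dn (dn N0))))
      (dn (dn (dn (dn N0)))) x = 0 := by
    rw [gs]
    refine (tsum_congr (fun k => ?_)).trans tsum_zero
    simp [da, dn, N0]
  -- family 1
  have hsum1 : Summable (fun k =>
      da (da (da (da (A1 m B t) N1) (dn N1)) (dn (dn N1))) (dn (dn (dn N1))) k *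
        x ^ dn (dn (dn (dn N1))) k) :=
    (hE1.step.step.step.step).summable x
  have hz1 : da (da (da (da (A1 m B t) N1) (dn N1)) (dn (dn N1))) (dn (dn (dn N1))) 0 *
      x ^ dn (dn (dn (dn N1))) 0 = 0 := by
    norm_num [da, dn, N1]
  have key1 : (∑' k, -(cc1 m B * p1 B k) * ((-(k:ℝ) - 1/4) * t ^ ((-(k:ℝ) - 1/4) - 1)) *
        x ^ N1 k)
      = -B * gs (da (da (da (da (A1 m B t) N1) (dn N1)) (dn (dn N1))) (dn (dn (dn N1))))
          (dn (dn (dn (dn N1)))) x := by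
    calc (∑' k, -(cc1 m B * p1 B k) * ((-(k:ℝ) - 1/4) * t ^ ((-(k:ℝ) - 1/4) - 1)) * x ^ N1 k)
        = ∑' k, -B *
            (da (da (da (da (A1 m B t) N1) (dn N1)) (dn (dn N1))) (dn (dn (dn N1))) (k+1) *
              x ^ dn (dn (dn (dn N1))) (k+1)) :=
          tsum_congr fun k => termid1 m B t x hB ht k
      _ = -B * ∑' k,
            (da (da (da (da (A1 m B t) N1) (dn N1)) (dn (dn N1))) (dn (dn (dn N1))) (k+1) *
              x ^ dn (dn (dn (dn N1))) (k+1)) := tsum_mul_left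
      _ = -B * (da (da (da (da (A1 m B t) N1) (dn N1)) (dn (dn N1))) (dn (dn (dn N1))) 0 *
              x ^ dn (dn (dn (dn N1))) 0
            + ∑' k,
            (da (da (da (da (A1 m B t) N1) (dn N1)) (dn (dn N1))) (dn (dn (dn N1))) (k+1) *
              x ^ dn (dn (dn (dn N1))) (k+1))) := by rw [hz1, zero_add]
      _ = _ := by rw [gs, ← Summable.tsum_eq_zero_add hsum1]
  -- family 2
  have hsum2 : Summable (fun k =>
      da (da (da (da (A2 m B t) N2) (dn N2)) (dn (dn N2))) (dn (dn (dn N2))) k *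
        x ^ dn (dn (dn (dn N2))) k) :=
    (hE2.step.step.step.step).summable x
  have hz2 : da (da (da (da (A2 m B t) N2) (dn N2)) (dn (dn N2))) (dn (dn (dn N2))) 0 *
      x ^ dn (dn (dn (dn N2))) 0 = 0 := by
    norm_num [da, dn, N2]
  have key2 : (∑' k, -(cc2 m B * p2 B k) * (((1:ℝ)/4 - (k:ℝ)) * t ^ (((1:ℝ)/4 - (k:ℝ)) - 1)) *
        x ^ N2 k)
      = -B * gs (da (da (da (da (A2 m B t) N2) (dn N2)) (dn (dn N2))) (dn (dn (dn N2))))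
          (dn (dn (dn (dn N2)))) x := by
    calc (∑' k, -(cc2 m B * p2 B k) * (((1:ℝ)/4 - (k:ℝ)) * t ^ (((1:ℝ)/4 - (k:ℝ)) - 1)) *
          x ^ N2 k)
        = ∑' k, -B *
            (da (da (da (da (A2 m B t) N2) (dn N2)) (dn (dn N2))) (dn (dn (dn N2))) (k+1) *
              x ^ dn (dn (dn (dn N2))) (k+1)) :=
          tsum_congr fun k => termid2 m B t x hB ht k
      _ = -B * ∑' k,
            (da (da (da (da (A2 m B t) N2) (dn N2)) (dn (dn N2))) (dn (dn (dn N2))) (k+1) *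
              x ^ dn (dn (dn (dn N2))) (k+1)) := tsum_mul_left
      _ = -B * (da (da (da (da (A2 m B t) N2) (dn N2)) (dn (dn N2))) (dn (dn (dn N2))) 0 *
              x ^ dn (dn (dn (dn N2))) 0
            + ∑' k,
            (da (da (da (da (A2 m B t) N2) (dn N2)) (dn (dn N2))) (dn (dn (dn N2))) (k+1) *
              x ^ dn (dn (dn (dn N2))) (k+1))) := by rw [hz2, zero_add]
      _ = _ := by rw [gs, ← Summable.tsum_eq_zero_add hsum2]
  rw [hG0, key1, key2]
  ring
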